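/- (Petersen's lemma, static form) Let C ∈ ℝ^{n×n} be symmetric, and let B ∈ ℝ^{n×p}, A ∈ ℝ^{q×n} be nonzero. Then C + B Δ A + Aᵀ Δᵀ Bᵀ ⪯ 0 for all Δ ∈ ℝ^{p×q} with Δᵀ Δ ⪯ I if and only if there exists ε > 0 such that C + ε B Bᵀ + ε⁻¹ Aᵀ A ⪯ 0. -/

import Mathlib

open Matrix

namespace PetersenAux

variable {n p q : ℕ}

/-- Cauchy–Schwarz for dotProduct. -/
lemma cs {m : ℕ} (v w : Fin m → ℝ) : (v ⬝ᵥ w)^2 ≤ (v ⬝ᵥ v) * (w ⬝ᵥ w) := by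
  simpa [dotProduct, sq] using Finset.sum_mul_sq_le_sq_mul_sq Finset.univ v w

lemma psd_iff {m : ℕ} (M : Matrix (Fin m) (Fin m) ℝ) :
    M.PosSemidef ↔ M.IsHermitian ∧ ∀ x : Fin m → ℝ, 0 ≤ x ⬝ᵥ (M *ᵥ x) := by
  simp [Matrix.posSemidef_iff_dotProduct_mulVec, star_trivial]

lemma dp_transfer {m k : ℕ} (M : Matrix (Fin m) (Fin k) ℝ) (x : Fin m → ℝ) (y : Fin k → ℝ) :
    x ⬝ᵥ (M *ᵥ y) = (Mᵀ *ᵥ x) ⬝ᵥ y := by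
  rw [dotProduct_mulVec, mulVec_transpose]

/-- quadratic forms -/
noncomputable def al (B : Matrix (Fin n) (Fin p) ℝ) (x : Fin n → ℝ) : ℝ :=
  (Bᵀ *ᵥ x) ⬝ᵥ (Bᵀ *ᵥ x)

noncomputable def be (A : Matrix (Fin q) (Fin n) ℝ) (x : Fin n → ℝ) : ℝ :=
  (A *ᵥ x) ⬝ᵥ (A *ᵥ x)

noncomputable def ga (C : Matrix (Fin n) (Fin n) ℝ) (x : Fin n → ℝ) : ℝ :=
  x ⬝ᵥ (C *ᵥ x)

noncomputable def ff (C : Matrix (Fin n) (Fin n) ℝ) (B : Matrix (Fin n) (Fin p) ℝ)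
    (A : Matrix (Fin q) (Fin n) ℝ) (ε : ℝ) (x : Fin n → ℝ) : ℝ :=
  ga C x + ε * al B x + ε⁻¹ * be A x

lemma al_nonneg (B : Matrix (Fin n) (Fin p) ℝ) (x : Fin n → ℝ) : 0 ≤ al B x := by
  unfold al dotProduct; exact Finset.sum_nonneg fun i _ => mul_self_nonneg _

lemma be_nonneg (A : Matrix (Fin q) (Fin n) ℝ) (x : Fin n → ℝ) : 0 ≤ be A x := by
  unfold be dotProduct; exact Finset.sum_nonneg fun i _ => mul_self_nonneg _

lemma al_eq (B : Matrix (Fin n) (Fin p) ℝ) (x : Fin n → ℝ) :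
    x ⬝ᵥ ((B * Bᵀ) *ᵥ x) = al B x := by
  rw [← mulVec_mulVec, dp_transfer]; rfl

lemma be_eq (A : Matrix (Fin q) (Fin n) ℝ) (x : Fin n → ℝ) :
    x ⬝ᵥ ((Aᵀ * A) *ᵥ x) = be A x := by
  rw [← mulVec_mulVec, dp_transfer, transpose_transpose]; rfl

lemma smul_form {m k : ℕ} (M : Matrix (Fin m) (Fin k) ℝ) (c : ℝ) (x : Fin m → ℝ)
    (y : Fin k → ℝ) : (c • x) ⬝ᵥ (M *ᵥ (c • y)) = c^2 * (x ⬝ᵥ (M *ᵥ y)) := by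
  rw [mulVec_smul, smul_dotProduct, dotProduct_smul]; simp [smul_eq_mul]; ring

lemma al_smul (B : Matrix (Fin n) (Fin p) ℝ) (c : ℝ) (x : Fin n → ℝ) :
    al B (c • x) = c^2 * al B x := by
  unfold al; rw [mulVec_smul, smul_dotProduct, dotProduct_smul]; simp [smul_eq_mul]; ring

lemma be_smul (A : Matrix (Fin q) (Fin n) ℝ) (c : ℝ) (x : Fin n → ℝ) :
    be A (c • x) = c^2 * be A x := by
  unfold be; rw [mulVec_smul, smul_dotProduct, dotProduct_smul]; simp [smul_eq_mul]; ring

lemma ga_smul (C : Matrix (Fin n) (Fin n) ℝ) (c : ℝ) (x : Fin n → ℝ) :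
    ga C (c • x) = c^2 * ga C x := smul_form C c x x

lemma ff_smul (C : Matrix (Fin n) (Fin n) ℝ) (B : Matrix (Fin n) (Fin p) ℝ)
    (A : Matrix (Fin q) (Fin n) ℝ) (ε c : ℝ) (x : Fin n → ℝ) :
    ff C B A ε (c • x) = c^2 * ff C B A ε x := by
  unfold ff; rw [al_smul, be_smul, ga_smul]; ring

lemma ff_eq (C : Matrix (Fin n) (Fin n) ℝ) (B : Matrix (Fin n) (Fin p) ℝ)
    (A : Matrix (Fin q) (Fin n) ℝ) (ε : ℝ) (x : Fin n → ℝ) :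
    x ⬝ᵥ ((C + ε • (B * Bᵀ) + ε⁻¹ • (Aᵀ * A)) *ᵥ x) = ff C B A ε x := by
  rw [add_mulVec, add_mulVec, dotProduct_add, dotProduct_add,
    smul_mulVec, smul_mulVec, dotProduct_smul, dotProduct_smul,
    smul_eq_mul, smul_eq_mul, al_eq, be_eq]
  rfl

lemma dp_self_pos {m : ℕ} {x : Fin m → ℝ} (hx : x ≠ 0) : 0 < x ⬝ᵥ x := by
  have h0 : 0 ≤ x ⬝ᵥ x := by
    unfold dotProduct; exact Finset.sum_nonneg fun i _ => mul_self_nonneg _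
  rcases lt_or_eq_of_le h0 with h | h
  · exact h
  · exact absurd (dotProduct_self_eq_zero.mp h.symm) hx

/-- difference identity -/
lemma ff_diff (C : Matrix (Fin n) (Fin n) ℝ) (B : Matrix (Fin n) (Fin p) ℝ)
    (A : Matrix (Fin q) (Fin n) ℝ) {ε ε' : ℝ} (hε : ε ≠ 0) (hε' : ε' ≠ 0) (x : Fin n → ℝ) :
    ff C B A ε x - ff C B A ε' x = (ε - ε') * (al B x - be A x / (ε * ε')) := by
  unfold ff; field_simp; ring

/-- continuity of quadratic forms -/
lemma cont_qf {m k : ℕ} (M : Matrix (Fin k) (Fin m) ℝ) :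
    Continuous fun x : Fin m → ℝ => (M *ᵥ x) ⬝ᵥ (M *ᵥ x) := by
  have hM : Continuous fun x : Fin m → ℝ => M *ᵥ x :=
    (Matrix.mulVecLin M).continuous_of_finiteDimensional
  unfold dotProduct
  exact continuous_finset_sum _ fun i _ =>
    ((continuous_apply i).comp hM).mul ((continuous_apply i).comp hM)

lemma cont_al (B : Matrix (Fin n) (Fin p) ℝ) : Continuous (al B) := cont_qf Bᵀ

lemma cont_be (A : Matrix (Fin q) (Fin n) ℝ) : Continuous (be A) := cont_qf A

lemma cont_ga (C : Matrix (Fin n) (Fin n) ℝ) : Continuous (ga C) := by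
  have hM : Continuous fun x : Fin n → ℝ => C *ᵥ x :=
    (Matrix.mulVecLin C).continuous_of_finiteDimensional
  unfold ga dotProduct
  exact continuous_finset_sum _ fun i _ =>
    (continuous_apply i).mul ((continuous_apply i).comp hM)

lemma cont_ff (C : Matrix (Fin n) (Fin n) ℝ) (B : Matrix (Fin n) (Fin p) ℝ)
    (A : Matrix (Fin q) (Fin n) ℝ) (ε : ℝ) : Continuous (ff C B A ε) := by
  exact ((cont_ga C).add ((continuous_const.mul (cont_al B)))).add (continuous_const.mul (cont_be A))

/-- the unit sphere w.r.t. dotProduct -/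
def sph (n : ℕ) : Set (Fin n → ℝ) := {x | x ⬝ᵥ x = 1}

lemma isCompact_sph : IsCompact (sph n) := by
  rw [Metric.isCompact_iff_isClosed_bounded]
  constructor
  · have : Continuous fun x : Fin n → ℝ => x ⬝ᵥ x := by
      unfold dotProduct
      exact continuous_finset_sum _ fun i _ => (continuous_apply i).mul (continuous_apply i)
    exact isClosed_eq this continuous_const
  · apply Metric.isBounded_closedBall (x := (0 : Fin n → ℝ)) (r := 1) |>.subset
    intro x hx
    simp only [Metric.mem_closedBall, dist_zero_right]
    rw [pi_norm_le_iff_of_nonneg (by norm_num)]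
    intro i
    have h1 : (x i) * (x i) ≤ x ⬝ᵥ x := by
      unfold dotProduct
      exact Finset.single_le_sum (f := fun j => x j * x j)
        (fun j _ => mul_self_nonneg _) (Finset.mem_univ i)
    have : |x i| ≤ 1 := by
      have hx' : x ⬝ᵥ x = 1 := hx
      nlinarith [abs_nonneg (x i), sq_abs (x i)]
    simpa using this

lemma sph_nonempty (hn : n ≠ 0) : (sph n).Nonempty := by
  have : 0 < n := Nat.pos_of_ne_zero hn
  refine ⟨Pi.single ⟨0, this⟩ 1, ?_⟩
  simp [sph, Set.mem_setOf_eq, dotProduct, Pi.single_apply, Finset.sum_ite_eq']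

/-- AM–GM with parameter -/
lemma amgm {ε s t : ℝ} (hε : 0 < ε) (hs : 0 ≤ s) (ht : 0 ≤ t) :
    2 * Real.sqrt (s * t) ≤ ε * s + ε⁻¹ * t := by
  have h1 : Real.sqrt (s*t) = Real.sqrt s * Real.sqrt t := Real.sqrt_mul hs t
  set a := Real.sqrt ε; set b := Real.sqrt s; set c := Real.sqrt ε⁻¹; set d := Real.sqrt t
  have h2 : 0 ≤ (a*b - c*d)^2 := sq_nonneg _
  have expand : (a*b - c*d)^2 = a^2*b^2 + c^2*d^2 - 2*(a*c)*(b*d) := by ring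
  have e1 : a ^ 2 = ε := Real.sq_sqrt hε.le
  have e2 : c ^ 2 = ε⁻¹ := Real.sq_sqrt (by positivity)
  have e3 : b ^ 2 = s := Real.sq_sqrt hs
  have e4 : d ^ 2 = t := Real.sq_sqrt ht
  have e5 : a * c = 1 := by
    rw [← Real.sqrt_mul hε.le, mul_inv_cancel₀ hε.ne', Real.sqrt_one]
  rw [expand, e1, e2, e3, e4, e5] at h2
  linarith [h2]

/-- scalar consequence of the robust LMI hypothesis -/
lemma scalar_of_hyp (C : Matrix (Fin n) (Fin n) ℝ) (B : Matrix (Fin n) (Fin p) ℝ)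
    (A : Matrix (Fin q) (Fin n) ℝ)
    (h : ∀ Δ : Matrix (Fin p) (Fin q) ℝ,
        ((1 : Matrix (Fin q) (Fin q) ℝ) - Δᵀ * Δ).PosSemidef →
        (-(C + B * Δ * A + Aᵀ * Δᵀ * Bᵀ)).PosSemidef) (x : Fin n → ℝ) :
    ga C x + 2 * Real.sqrt (al B x * be A x) ≤ 0 := by
  set u := Bᵀ *ᵥ x with hu
  set v := A *ᵥ x with hv
  by_cases hd : al B x = 0 ∨ be A x = 0
  · have h0 := h 0 (by simpa using (Matrix.PosSemidef.one :
      (1 : Matrix (Fin q) (Fin q) ℝ).PosSemidef))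
    have hq := ((psd_iff _).mp h0).2 x
    have e : (-(C + B * (0 : Matrix (Fin p) (Fin q) ℝ) * A
        + Aᵀ * (0 : Matrix (Fin p) (Fin q) ℝ)ᵀ * Bᵀ)) = -C := by
      simp
    rw [e, neg_mulVec, dotProduct_neg] at hq
    have hz : Real.sqrt (al B x * be A x) = 0 := by
      rcases hd with h1 | h1 <;> simp [h1]
    rw [hz]
    have hga : x ⬝ᵥ (C *ᵥ x) = ga C x := rfl
    rw [hga] at hq
    linarith
  · push_neg at hd
    have hal : 0 < al B x := lt_of_le_of_ne (al_nonneg B x) (Ne.symm hd.1)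
    have hbe : 0 < be A x := lt_of_le_of_ne (be_nonneg A x) (Ne.symm hd.2)
    set sa := Real.sqrt (al B x) with hsa
    set sb := Real.sqrt (be A x) with hsb
    have hsa0 : 0 < sa := Real.sqrt_pos.mpr hal
    have hsb0 : 0 < sb := Real.sqrt_pos.mpr hbe
    have hsa2 : sa^2 = al B x := Real.sq_sqrt hal.le
    have hsb2 : sb^2 = be A x := Real.sq_sqrt hbe.le
    set c := (sa * sb)⁻¹ with hc
    set Δ := c • vecMulVec u v with hΔdef
    have mvv : ∀ z : Fin q → ℝ, Δ *ᵥ z = (c * (v ⬝ᵥ z)) • u := by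
      intro z
      funext i
      simp only [hΔdef, Matrix.mulVec, dotProduct, Matrix.smul_apply,
        Matrix.vecMulVec_apply, smul_eq_mul, Pi.smul_apply, Finset.mul_sum, Finset.sum_mul]
      exact Finset.sum_congr rfl fun j _ => by ring
    have hpsd : ((1 : Matrix (Fin q) (Fin q) ℝ) - Δᵀ * Δ).PosSemidef := by
      rw [psd_iff]
      constructor
      · rw [Matrix.IsHermitian, conjTranspose_eq_transpose_of_trivial]
        simp [Matrix.transpose_sub, Matrix.transpose_mul]
      · intro z
        have e2 : z ⬝ᵥ (((1 : Matrix (Fin q) (Fin q) ℝ) - Δᵀ * Δ) *ᵥ z)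
            = z ⬝ᵥ z - (Δ *ᵥ z) ⬝ᵥ (Δ *ᵥ z) := by
          rw [sub_mulVec, dotProduct_sub, one_mulVec, be_eq]; rfl
        rw [e2, mvv z]
        have e3 : ((c * (v ⬝ᵥ z)) • u) ⬝ᵥ ((c * (v ⬝ᵥ z)) • u)
            = (c * (v ⬝ᵥ z))^2 * al B x := by
          rw [smul_dotProduct, dotProduct_smul]
          have : u ⬝ᵥ u = al B x := rfl
          rw [smul_eq_mul, smul_eq_mul, this]; ring
        rw [e3]
        have hcs := cs v z
        have hvv : v ⬝ᵥ v = be A x := rfl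
        rw [hvv] at hcs
        have hc2 : c^2 = (al B x * be A x)⁻¹ := by
          rw [hc, ← hsa2, ← hsb2]; rw [mul_inv, mul_pow]; rw [inv_pow, inv_pow]; ring
        have key : (c * (v ⬝ᵥ z))^2 * al B x ≤ z ⬝ᵥ z := by
          rw [mul_pow, hc2]
          rw [inv_eq_one_div]
          rw [div_mul_eq_mul_div, div_mul_eq_mul_div, div_le_iff₀ (by positivity)]
          calc 1 * (v ⬝ᵥ z)^2 * al B x = (v ⬝ᵥ z)^2 * al B x := by ring
            _ ≤ (be A x * (z ⬝ᵥ z)) * al B x := by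
                exact mul_le_mul_of_nonneg_right hcs (al_nonneg B x)
            _ = z ⬝ᵥ z * (al B x * be A x) := by ring
        linarith
    have hq := ((psd_iff _).mp (h Δ hpsd)).2 x
    have hterm1 : x ⬝ᵥ ((B * Δ * A) *ᵥ x) = u ⬝ᵥ (Δ *ᵥ v) := by
      rw [← mulVec_mulVec, ← mulVec_mulVec, dp_transfer]
    have hterm2 : x ⬝ᵥ ((Aᵀ * Δᵀ * Bᵀ) *ᵥ x) = u ⬝ᵥ (Δ *ᵥ v) := by
      have e : Aᵀ * Δᵀ * Bᵀ = (B * Δ * A)ᵀ := by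
        simp [Matrix.transpose_mul, Matrix.mul_assoc]
      rw [e, dp_transfer, transpose_transpose, dotProduct_comm, hterm1]
    have hval : u ⬝ᵥ (Δ *ᵥ v) = sa * sb := by
      rw [mvv v, dotProduct_smul]
      have huu : u ⬝ᵥ u = al B x := rfl
      have hvv : v ⬝ᵥ v = be A x := rfl
      rw [smul_eq_mul, huu, hvv, hc, ← hsa2, ← hsb2]
      field_simp
    have hsqrt : Real.sqrt (al B x * be A x) = sa * sb := by
      rw [hsa, hsb, ← Real.sqrt_mul hal.le]
    rw [neg_mulVec, dotProduct_neg, add_mulVec, add_mulVec, dotProduct_add, dotProduct_add,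
      hterm1, hterm2, hval] at hq
    have hga : x ⬝ᵥ (C *ᵥ x) = ga C x := rfl
    rw [hga] at hq
    rw [hsqrt]
    linarith

/-- kernel lemma -/
lemma psd_kernel {m : ℕ} {M : Matrix (Fin m) (Fin m) ℝ} (hM : M.PosSemidef)
    {x : Fin m → ℝ} (hx : x ⬝ᵥ (M *ᵥ x) = 0) : M *ᵥ x = 0 := by
  exact (hM.dotProduct_mulVec_zero_iff x).mp (by simpa [star_trivial] using hx)

set_option maxHeartbeats 2000000 in
/-- The hard direction, scalar form. -/
lemma hard (C : Matrix (Fin n) (Fin n) ℝ) (hC : C.IsSymm)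
    (B : Matrix (Fin n) (Fin p) ℝ) (hB : B ≠ 0)
    (A : Matrix (Fin q) (Fin n) ℝ) (hA : A ≠ 0)
    (hs : ∀ x : Fin n → ℝ, ga C x + 2 * Real.sqrt (al B x * be A x) ≤ 0) :
    ∃ ε : ℝ, 0 < ε ∧ ∀ x : Fin n → ℝ, ff C B A ε x ≤ 0 := by
  by_contra hcon
  push_neg at hcon
  -- basic facts
  have hn : n ≠ 0 := by rintro rfl; exact hB (by ext i j; exact i.elim0)
  obtain ⟨i0, j0, hij⟩ : ∃ i j, B i j ≠ 0 := by
    by_contra hc; push_neg at hc; exact hB (by ext i j; simpa using hc i j)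
  obtain ⟨k0, l0, hkl⟩ : ∃ i j, A i j ≠ 0 := by
    by_contra hc; push_neg at hc; exact hA (by ext i j; simpa using hc i j)
  set v0 : Fin n → ℝ := Pi.single i0 1 with hv0def
  set v1 : Fin n → ℝ := Pi.single l0 1 with hv1def
  have hv0S : v0 ∈ sph n := by
    simp [sph, Set.mem_setOf_eq, hv0def, dotProduct, Pi.single_apply, Finset.sum_ite_eq']
  have hv1S : v1 ∈ sph n := by
    simp [sph, Set.mem_setOf_eq, hv1def, dotProduct, Pi.single_apply, Finset.sum_ite_eq']
  have hv0al : 0 < al B v0 := by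
    have hvec : Bᵀ *ᵥ v0 = fun j => B i0 j := by
      funext j
      simp [hv0def, mulVec, dotProduct, Pi.single_apply, Finset.sum_ite_eq', mul_ite]
    unfold al
    rw [hvec]
    calc (0:ℝ) < B i0 j0 * B i0 j0 := mul_self_pos.mpr hij
      _ ≤ _ := Finset.single_le_sum (f := fun j => B i0 j * B i0 j)
          (fun j _ => mul_self_nonneg _) (Finset.mem_univ j0)
  have hv1be : 0 < be A v1 := by
    have hvec : A *ᵥ v1 = fun i => A i l0 := by
      funext i
      simp [hv1def, mulVec, dotProduct, Pi.single_apply, Finset.sum_ite_eq', mul_ite]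
    unfold be
    rw [hvec]
    calc (0:ℝ) < A k0 l0 * A k0 l0 := mul_self_pos.mpr hkl
      _ ≤ _ := Finset.single_le_sum (f := fun i => A i l0 * A i l0)
          (fun i _ => mul_self_nonneg _) (Finset.mem_univ k0)
  -- maximizers
  have hmax : ∀ ε : ℝ, ∃ x ∈ sph n, ∀ y ∈ sph n, ff C B A ε y ≤ ff C B A ε x := by
    intro ε
    obtain ⟨x, hx, hmx⟩ := isCompact_sph.exists_isMaxOn (sph_nonempty hn)
      (cont_ff C B A ε).continuousOn
    exact ⟨x, hx, fun y hy => hmx hy⟩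
  choose xm hxmS hxmax using hmax
  set φ : ℝ → ℝ := fun ε => ff C B A ε (xm ε) with hφdef
  -- positivity of φ
  have hφpos : ∀ ε : ℝ, 0 < ε → 0 < φ ε := by
    intro ε hε
    obtain ⟨x, hx⟩ := hcon ε hε
    have hx0 : x ≠ 0 := by
      rintro rfl
      simp only [ff, al, be, ga, mulVec_zero, dotProduct_zero, zero_dotProduct,
        mul_zero, add_zero] at hx
      exact lt_irrefl 0 hx
    have hxx : 0 < x ⬝ᵥ x := dp_self_pos hx0
    set c : ℝ := (Real.sqrt (x ⬝ᵥ x))⁻¹ with hcdef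
    have hc2 : c^2 = (x ⬝ᵥ x)⁻¹ := by
      rw [hcdef, inv_pow, Real.sq_sqrt hxx.le]
    have hcS : (c • x) ∈ sph n := by
      show (c • x) ⬝ᵥ (c • x) = 1
      rw [smul_dotProduct, dotProduct_smul, smul_eq_mul, smul_eq_mul, ← mul_assoc,
        ← sq, hc2]
      exact inv_mul_cancel₀ hxx.ne'
    have hval : ff C B A ε (c • x) = c^2 * ff C B A ε x := ff_smul C B A ε c x
    have : 0 < ff C B A ε (c • x) := by
      rw [hval, hc2]
      exact mul_pos (inv_pos.mpr hxx) hx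
    exact lt_of_lt_of_le this (hxmax ε _ hcS)
  -- uniform bounds on the sphere
  obtain ⟨xa, hxaS, hKa'⟩ := isCompact_sph.exists_isMaxOn (sph_nonempty hn)
    (cont_al B).continuousOn
  obtain ⟨xb, hxbS, hKb'⟩ := isCompact_sph.exists_isMaxOn (sph_nonempty hn)
    (cont_be A).continuousOn
  set Ka : ℝ := al B xa with hKadef
  set Kb : ℝ := be A xb with hKbdef
  have hKa : ∀ y ∈ sph n, al B y ≤ Ka := fun y hy => hKa' hy
  have hKb : ∀ y ∈ sph n, be A y ≤ Kb := fun y hy => hKb' hy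
  have hKa0 : 0 ≤ Ka := al_nonneg B xa
  have hKb0 : 0 ≤ Kb := be_nonneg A xb
  -- lower bounds for φ
  have hlb : ∀ v ∈ sph n, ∀ ε : ℝ, 0 < ε →
      ga C v + ε * al B v ≤ φ ε ∧ ga C v + ε⁻¹ * be A v ≤ φ ε := by
    intro v hv ε hε
    have h1 : ff C B A ε v ≤ φ ε := hxmax ε v hv
    unfold ff at h1
    have h2 : 0 ≤ ε⁻¹ * be A v := mul_nonneg (inv_pos.mpr hε).le (be_nonneg A v)
    have h3 : 0 ≤ ε * al B v := mul_nonneg hε.le (al_nonneg B v)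
    exact ⟨by linarith, by linarith⟩
  set g1 : ℝ := φ 1 with hg1def
  set R : ℝ := max 1 ((g1 + 1 - ga C v0) / al B v0) with hRdef
  have hR1 : (1:ℝ) ≤ R := le_max_left _ _
  have hRbig : ∀ ε : ℝ, R ≤ ε → g1 + 1 ≤ φ ε := by
    intro ε hRe
    have hε : 0 < ε := lt_of_lt_of_le (lt_of_lt_of_le one_pos hR1) hRe
    have h1 := (hlb v0 hv0S ε hε).1
    have h2 : (g1 + 1 - ga C v0) / al B v0 ≤ ε := le_trans (le_max_right _ _) hRe
    have h3 : g1 + 1 - ga C v0 ≤ ε * al B v0 := by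
      rw [div_le_iff₀ hv0al] at h2; linarith
    linarith
  set r : ℝ := min 1 (be A v1 / max (g1 + 1 - ga C v1) 1) with hrdef
  have hmaxd : (0:ℝ) < max (g1 + 1 - ga C v1) 1 := lt_of_lt_of_le one_pos (le_max_right _ _)
  have hr0 : 0 < r := lt_min one_pos (div_pos hv1be hmaxd)
  have hr1 : r ≤ 1 := min_le_left _ _
  have hrsmall : ∀ ε : ℝ, 0 < ε → ε ≤ r → g1 + 1 ≤ φ ε := by
    intro ε hε hεr
    have h1 := (hlb v1 hv1S ε hε).2
    have h2 : ε ≤ be A v1 / max (g1 + 1 - ga C v1) 1 := le_trans hεr (min_le_right _ _)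
    have h3 : ε * max (g1 + 1 - ga C v1) 1 ≤ be A v1 := by
      rw [le_div_iff₀ hmaxd] at h2; linarith
    have h4 : max (g1 + 1 - ga C v1) 1 ≤ ε⁻¹ * be A v1 := by
      rw [← div_eq_inv_mul, le_div_iff₀ hε]; linarith
    have h5 : g1 + 1 - ga C v1 ≤ ε⁻¹ * be A v1 := le_trans (le_max_left _ _) h4
    linarith
  -- Lipschitz bound for φ on [r, R]
  set L : ℝ := Ka + Kb / r^2 with hLdef
  have hL0 : 0 ≤ L := add_nonneg hKa0 (div_nonneg hKb0 (by positivity))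
  have hLip1 : ∀ ε ∈ Set.Icc r R, ∀ ε' ∈ Set.Icc r R, φ ε - φ ε' ≤ L * |ε - ε'| := by
    intro ε hε ε' hε'
    have hεpos : 0 < ε := lt_of_lt_of_le hr0 hε.1
    have hε'pos : 0 < ε' := lt_of_lt_of_le hr0 hε'.1
    have h1 : ff C B A ε' (xm ε) ≤ φ ε' := hxmax ε' _ (hxmS ε)
    have h2 : φ ε - φ ε' ≤ ff C B A ε (xm ε) - ff C B A ε' (xm ε) := by
      simp only [hφdef]; linarith
    rw [ff_diff C B A hεpos.ne' hε'pos.ne' (xm ε)] at h2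
    have hT : |al B (xm ε) - be A (xm ε) / (ε * ε')| ≤ L := by
      rw [abs_le]
      have ha1 : al B (xm ε) ≤ Ka := hKa _ (hxmS ε)
      have ha0 : 0 ≤ al B (xm ε) := al_nonneg B _
      have hb1 : be A (xm ε) ≤ Kb := hKb _ (hxmS ε)
      have hb0 : 0 ≤ be A (xm ε) := be_nonneg A _
      have hεε' : r^2 ≤ ε * ε' := by
        have := mul_le_mul hε.1 hε'.1 hr0.le hεpos.le
        nlinarith [hε.1, hε'.1, hr0]
      have hdiv : be A (xm ε) / (ε * ε') ≤ Kb / r^2 := by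
        apply div_le_div₀ hKb0 hb1 (by positivity) hεε'
      have hdiv0 : 0 ≤ be A (xm ε) / (ε * ε') := div_nonneg hb0 (by positivity)
      constructor
      · rw [hLdef]; linarith
      · rw [hLdef]; linarith
    calc φ ε - φ ε' ≤ (ε - ε') * (al B (xm ε) - be A (xm ε) / (ε * ε')) := h2
      _ ≤ |(ε - ε') * (al B (xm ε) - be A (xm ε) / (ε * ε'))| := le_abs_self _
      _ = |ε - ε'| * |al B (xm ε) - be A (xm ε) / (ε * ε')| := abs_mul _ _
      _ ≤ |ε - ε'| * L := mul_le_mul_of_nonneg_left hT (abs_nonneg _)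
      _ = L * |ε - ε'| := mul_comm _ _
  have hφcont : ContinuousOn φ (Set.Icc r R) := by
    apply LipschitzOnWith.continuousOn (K := Real.toNNReal L)
    apply LipschitzOnWith.of_dist_le_mul
    intro ε hε ε' hε'
    rw [Real.dist_eq, Real.dist_eq, Real.coe_toNNReal L hL0]
    rw [abs_sub_le_iff]
    constructor
    · exact hLip1 ε hε ε' hε'
    · rw [abs_sub_comm]; exact hLip1 ε' hε' ε hε
  have h1mem : (1:ℝ) ∈ Set.Icc r R := ⟨hr1, hR1⟩
  obtain ⟨e, heIcc, hemin'⟩ := isCompact_Icc.exists_isMinOn ⟨1, h1mem⟩ hφcont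
  have hemin : ∀ ε ∈ Set.Icc r R, φ e ≤ φ ε := fun ε hε => hemin' hε
  have hepos : 0 < e := lt_of_lt_of_le hr0 heIcc.1
  have hglobal : ∀ ε : ℝ, 0 < ε → φ e ≤ φ ε := by
    intro ε hε
    rcases le_or_gt ε R with h1 | h1
    · rcases le_or_gt r ε with h2 | h2
      · exact hemin ε ⟨h2, h1⟩
      · have := hrsmall ε hε h2.le
        have h3 := hemin 1 h1mem
        have h4 := hφpos 1 one_pos
        linarith
    · have := hRbig ε h1.le
      have h3 := hemin 1 h1mem
      linarith
  -- sequences approaching e from above and below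
  have key : ∃ x₂ ∈ sph n, be A x₂ ≤ al B x₂ * (e * e) ∧ ff C B A e x₂ = φ e := by
    set sq2 : ℕ → ℝ := fun k => e + ((k:ℝ)+1)⁻¹ with hsqdef
    have hsgt : ∀ k, e < sq2 k := fun k => lt_add_of_pos_right e (by positivity)
    have hspos : ∀ k, 0 < sq2 k := fun k => lt_trans hepos (hsgt k)
    have htend : Filter.Tendsto sq2 Filter.atTop (nhds e) := by
      have h1 : Filter.Tendsto (fun k : ℕ => ((k:ℝ)+1)⁻¹) Filter.atTop (nhds 0) := by
        exact (tendsto_one_div_add_atTop_nhds_zero_nat (𝕜 := ℝ)).congr (fun k => one_div _)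
      simpa using Filter.Tendsto.add (tendsto_const_nhds (x := e)) h1
    set y : ℕ → Fin n → ℝ := fun k => xm (sq2 k) with hydef
    have hyS : ∀ k, y k ∈ sph n := fun k => hxmS (sq2 k)
    have hbasic : ∀ k, ff C B A e (y k) ≤ φ e ∧ φ e ≤ ff C B A (sq2 k) (y k) := by
      intro k
      exact ⟨hxmax e _ (hyS k), hglobal (sq2 k) (hspos k)⟩
    have hineq : ∀ k, be A (y k) ≤ al B (y k) * (sq2 k * e) := by
      intro k
      obtain ⟨hb1, hb2⟩ := hbasic k
      have hd := ff_diff C B A (hspos k).ne' hepos.ne' (y k)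
      have hsgtk := hsgt k
      have hsposk := hspos k
      clear_value sq2 y φ
      have h3 : 0 ≤ (sq2 k - e) * (al B (y k) - be A (y k) / (sq2 k * e)) := by
        rw [← hd]; linarith
      have h4 : 0 ≤ al B (y k) - be A (y k) / (sq2 k * e) :=
        nonneg_of_mul_nonneg_right h3 (sub_pos.mpr hsgtk)
      have h5 : be A (y k) / (sq2 k * e) ≤ al B (y k) := by linarith
      rw [div_le_iff₀ (mul_pos hsposk hepos)] at h5
      exact h5
    have hlow : ∀ k, φ e - (sq2 k - e) * Ka ≤ ff C B A e (y k) := by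
      intro k
      obtain ⟨hb1, hb2⟩ := hbasic k
      have hd := ff_diff C B A (hspos k).ne' hepos.ne' (y k)
      have hsgtk := hsgt k
      have hKay := hKa _ (hyS k)
      have hben : 0 ≤ be A (y k) / (sq2 k * e) :=
        div_nonneg (be_nonneg A _) (mul_pos (hspos k) hepos).le
      clear_value sq2 y φ Ka Kb
      have hT : al B (y k) - be A (y k) / (sq2 k * e) ≤ Ka := by linarith
      have h6 : (sq2 k - e) * (al B (y k) - be A (y k) / (sq2 k * e))
          ≤ (sq2 k - e) * Ka :=
        mul_le_mul_of_nonneg_left hT (sub_pos.mpr (hsgt k)).le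
      have h9 : ff C B A e (y k) = ff C B A (sq2 k) (y k)
          - (sq2 k - e) * (al B (y k) - be A (y k) / (sq2 k * e)) := by linarith
      linarith
    obtain ⟨x₂, hx₂S, ψ, hψmono, hψtend⟩ := isCompact_sph.tendsto_subseq hyS
    have hψat : Filter.Tendsto ψ Filter.atTop Filter.atTop := hψmono.tendsto_atTop
    have htseq : Filter.Tendsto (fun j => sq2 (ψ j)) Filter.atTop (nhds e) :=
      htend.comp hψat
    have htal : Filter.Tendsto (fun j => al B (y (ψ j))) Filter.atTop (nhds (al B x₂)) :=
      ((cont_al B).tendsto x₂).comp hψtend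
    have htbe : Filter.Tendsto (fun j => be A (y (ψ j))) Filter.atTop (nhds (be A x₂)) :=
      ((cont_be A).tendsto x₂).comp hψtend
    have htff : Filter.Tendsto (fun j => ff C B A e (y (ψ j))) Filter.atTop
        (nhds (ff C B A e x₂)) := ((cont_ff C B A e).tendsto x₂).comp hψtend
    refine ⟨x₂, hx₂S, ?_, ?_⟩
    · exact le_of_tendsto_of_tendsto' htbe (htal.mul (htseq.mul_const e))
        (fun j => hineq (ψ j))
    · have hle : ff C B A e x₂ ≤ φ e :=
        le_of_tendsto htff (Filter.Eventually.of_forall fun j => (hbasic (ψ j)).1)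
      have htlow : Filter.Tendsto (fun j => φ e - (sq2 (ψ j) - e) * Ka) Filter.atTop
          (nhds (φ e)) := by
        have := ((htseq.sub_const e).mul_const Ka)
        simpa using Filter.Tendsto.sub (tendsto_const_nhds (x := φ e)) this
      have hge : φ e ≤ ff C B A e x₂ :=
        le_of_tendsto_of_tendsto' htlow htff (fun j => hlow (ψ j))
      linarith
  have key' : ∃ x₁ ∈ sph n, al B x₁ * (e * e) ≤ be A x₁ ∧ ff C B A e x₁ = φ e := by
    set sq2 : ℕ → ℝ := fun k => e * (1 - ((k:ℝ)+2)⁻¹) with hsqdef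
    have hfrac : ∀ k : ℕ, (0:ℝ) < ((k:ℝ)+2)⁻¹ ∧ ((k:ℝ)+2)⁻¹ ≤ 1/2 := by
      intro k
      constructor
      · positivity
      · rw [inv_le_comm₀ (by positivity) (by norm_num)]
        push_cast
        linarith [Nat.cast_nonneg (α := ℝ) k]
    have hslt : ∀ k, sq2 k < e := by
      intro k
      have := (hfrac k).1
      have h2 : 1 - ((k:ℝ)+2)⁻¹ < 1 := by linarith
      calc sq2 k = e * (1 - ((k:ℝ)+2)⁻¹) := rfl
        _ < e * 1 := by exact mul_lt_mul_of_pos_left h2 hepos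
        _ = e := mul_one e
    have hsge : ∀ k, e/2 ≤ sq2 k := by
      intro k
      obtain ⟨h1, h2⟩ := hfrac k
      have : (1:ℝ)/2 ≤ 1 - ((k:ℝ)+2)⁻¹ := by linarith
      calc e/2 = e * (1/2) := by ring
        _ ≤ e * (1 - ((k:ℝ)+2)⁻¹) := mul_le_mul_of_nonneg_left this hepos.le
    have hspos : ∀ k, 0 < sq2 k := fun k => lt_of_lt_of_le (by positivity) (hsge k)
    have htend : Filter.Tendsto sq2 Filter.atTop (nhds e) := by
      have h1 : Filter.Tendsto (fun k : ℕ => ((k:ℝ)+2)⁻¹) Filter.atTop (nhds 0) := by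
        have h2 : Filter.Tendsto (fun k : ℕ => ((k:ℝ)+2)) Filter.atTop Filter.atTop :=
          Filter.tendsto_atTop_add_const_right _ 2 tendsto_natCast_atTop_atTop
        exact h2.inv_tendsto_atTop
      have h3 := Filter.Tendsto.const_mul e
        (Filter.Tendsto.sub (tendsto_const_nhds (x := (1:ℝ))) h1)
      simpa using h3
    set y : ℕ → Fin n → ℝ := fun k => xm (sq2 k) with hydef
    have hyS : ∀ k, y k ∈ sph n := fun k => hxmS (sq2 k)
    have hbasic : ∀ k, ff C B A e (y k) ≤ φ e ∧ φ e ≤ ff C B A (sq2 k) (y k) := by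
      intro k
      exact ⟨hxmax e _ (hyS k), hglobal (sq2 k) (hspos k)⟩
    have hineq : ∀ k, al B (y k) * (sq2 k * e) ≤ be A (y k) := by
      intro k
      obtain ⟨hb1, hb2⟩ := hbasic k
      have hd := ff_diff C B A (hspos k).ne' hepos.ne' (y k)
      have hsltk := hslt k
      have hsposk := hspos k
      clear_value sq2 y φ
      have h3 : 0 ≤ (sq2 k - e) * (al B (y k) - be A (y k) / (sq2 k * e)) := by
        rw [← hd]; linarith
      have h4 : al B (y k) - be A (y k) / (sq2 k * e) ≤ 0 :=
        nonpos_of_mul_nonneg_right h3 (sub_neg.mpr hsltk)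
      have h5 : al B (y k) ≤ be A (y k) / (sq2 k * e) := by linarith
      rw [le_div_iff₀ (mul_pos hsposk hepos)] at h5
      exact h5
    have hlow : ∀ k, φ e - (e - sq2 k) * (2 * Kb / e^2) ≤ ff C B A e (y k) := by
      intro k
      obtain ⟨hb1, hb2⟩ := hbasic k
      have hd := ff_diff C B A hepos.ne' (hspos k).ne' (y k)
      have hsltk := hslt k
      have hsgek := hsge k
      have hsposk := hspos k
      have hbK := hKb _ (hyS k)
      have hal0 := al_nonneg B (y k)
      clear_value sq2 y φ Ka Kb
      have hT : -(2 * Kb / e^2) ≤ al B (y k) - be A (y k) / (e * sq2 k) := by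
        have hprod : e^2/2 ≤ e * sq2 k := by
          calc e^2/2 = e * (e/2) := by ring
            _ ≤ e * sq2 k := mul_le_mul_of_nonneg_left hsgek hepos.le
        have hdiv : be A (y k) / (e * sq2 k) ≤ Kb / (e^2/2) :=
          div_le_div₀ hKb0 hbK (by positivity) hprod
        have heq2 : Kb / (e^2/2) = 2 * Kb / e^2 := by
          field_simp
        rw [heq2] at hdiv
        linarith
      have h6 : ff C B A e (y k) - ff C B A (sq2 k) (y k)
          = (e - sq2 k) * (al B (y k) - be A (y k) / (e * sq2 k)) := hd
      have h7 : (e - sq2 k) * (-(2 * Kb / e^2))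
          ≤ (e - sq2 k) * (al B (y k) - be A (y k) / (e * sq2 k)) :=
        mul_le_mul_of_nonneg_left hT (sub_pos.mpr hsltk).le
      linarith [h6, h7, hb2]
    obtain ⟨x₁, hx₁S, ψ, hψmono, hψtend⟩ := isCompact_sph.tendsto_subseq hyS
    have hψat : Filter.Tendsto ψ Filter.atTop Filter.atTop := hψmono.tendsto_atTop
    have htseq : Filter.Tendsto (fun j => sq2 (ψ j)) Filter.atTop (nhds e) :=
      htend.comp hψat
    have htal : Filter.Tendsto (fun j => al B (y (ψ j))) Filter.atTop (nhds (al B x₁)) :=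
      ((cont_al B).tendsto x₁).comp hψtend
    have htbe : Filter.Tendsto (fun j => be A (y (ψ j))) Filter.atTop (nhds (be A x₁)) :=
      ((cont_be A).tendsto x₁).comp hψtend
    have htff : Filter.Tendsto (fun j => ff C B A e (y (ψ j))) Filter.atTop
        (nhds (ff C B A e x₁)) := ((cont_ff C B A e).tendsto x₁).comp hψtend
    refine ⟨x₁, hx₁S, ?_, ?_⟩
    · exact le_of_tendsto_of_tendsto' (htal.mul (htseq.mul_const e)) htbe
        (fun j => hineq (ψ j))
    · have hle : ff C B A e x₁ ≤ φ e :=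
        le_of_tendsto htff (Filter.Eventually.of_forall fun j => (hbasic (ψ j)).1)
      have htlow : Filter.Tendsto (fun j => φ e - (e - sq2 (ψ j)) * (2 * Kb / e^2))
          Filter.atTop (nhds (φ e)) := by
        have h1 : Filter.Tendsto (fun j => e - sq2 (ψ j)) Filter.atTop (nhds 0) := by
          simpa using Filter.Tendsto.sub (tendsto_const_nhds (x := e)) htseq
        have := h1.mul_const (2 * Kb / e^2)
        simpa using Filter.Tendsto.sub (tendsto_const_nhds (x := φ e)) this
      have hge : φ e ≤ ff C B A e x₁ :=
        le_of_tendsto_of_tendsto' htlow htff (fun j => hlow (ψ j))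
      linarith
  obtain ⟨x₂, hx₂S, hx₂ineq, hx₂f⟩ := key
  obtain ⟨x₁, hx₁S, hx₁ineq, hx₁f⟩ := key'
  -- the PSD matrix P and kernel facts
  set P : Matrix (Fin n) (Fin n) ℝ :=
    φ e • (1 : Matrix (Fin n) (Fin n) ℝ) - (C + e • (B * Bᵀ) + e⁻¹ • (Aᵀ * A)) with hPdef
  have hPform : ∀ x : Fin n → ℝ, x ⬝ᵥ (P *ᵥ x) = φ e * (x ⬝ᵥ x) - ff C B A e x := by
    intro x
    rw [hPdef, sub_mulVec, dotProduct_sub, ff_eq, smul_mulVec, one_mulVec,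
      dotProduct_smul, smul_eq_mul]
  have hP : P.PosSemidef := by
    rw [psd_iff]
    constructor
    · rw [Matrix.IsHermitian, conjTranspose_eq_transpose_of_trivial, hPdef]
      simp [Matrix.transpose_sub, Matrix.transpose_smul, Matrix.transpose_add,
        Matrix.transpose_mul, hC.eq]
    · intro x
      rw [hPform]
      rcases eq_or_ne x 0 with rfl | hx0
      · simp [ff, al, be, ga]
      · have hxx : 0 < x ⬝ᵥ x := dp_self_pos hx0
        set c : ℝ := (Real.sqrt (x ⬝ᵥ x))⁻¹ with hcdef
        have hc2 : c^2 = (x ⬝ᵥ x)⁻¹ := by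
          rw [hcdef, inv_pow, Real.sq_sqrt hxx.le]
        have hcS : (c • x) ∈ sph n := by
          show (c • x) ⬝ᵥ (c • x) = 1
          rw [smul_dotProduct, dotProduct_smul, smul_eq_mul, smul_eq_mul, ← mul_assoc,
            ← sq, hc2]
          exact inv_mul_cancel₀ hxx.ne'
        have hval : ff C B A e (c • x) = c^2 * ff C B A e x := ff_smul C B A e c x
        have hle : ff C B A e (c • x) ≤ φ e := hxmax e _ hcS
        rw [hval, hc2] at hle
        rw [inv_mul_le_iff₀ hxx] at hle
        linarith [hle]
  have hPx₁ : P *ᵥ x₁ = 0 := by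
    apply psd_kernel hP
    rw [hPform, hx₁f, hx₁S]
    ring
  have hPx₂ : P *ᵥ x₂ = 0 := by
    apply psd_kernel hP
    rw [hPform, hx₂f, hx₂S]
    ring
  -- find the balanced vector w
  have hwex : ∃ w : Fin n → ℝ, w ≠ 0 ∧ P *ᵥ w = 0 ∧ e^2 * al B w = be A w := by
    set z : ℝ → (Fin n → ℝ) := fun θ => (1 - θ) • x₁ + θ • x₂ with hzdef
    have hz0 : z 0 = x₁ := by simp [hzdef]
    have hz1 : z 1 = x₂ := by simp [hzdef]
    have hzP : ∀ θ, P *ᵥ (z θ) = 0 := by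
      intro θ
      show P *ᵥ ((1 - θ) • x₁ + θ • x₂) = 0
      rw [mulVec_add, mulVec_smul, mulVec_smul, hPx₁, hPx₂]
      simp
    have hx₁0 : x₁ ≠ 0 := by
      intro h
      have h1 : x₁ ⬝ᵥ x₁ = 1 := hx₁S
      rw [h] at h1
      simp at h1
    have hx₂0 : x₂ ≠ 0 := by
      intro h
      have h1 : x₂ ⬝ᵥ x₂ = 1 := hx₂S
      rw [h] at h1
      simp at h1
    set g : ℝ → ℝ := fun θ => e^2 * al B (z θ) - be A (z θ) with hgdef
    have hgc : Continuous g := by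
      have hzc : Continuous z := by
        apply Continuous.add
        · exact (continuous_const.sub continuous_id).smul continuous_const
        · exact continuous_id.smul continuous_const
      exact (continuous_const.mul ((cont_al B).comp hzc)).sub ((cont_be A).comp hzc)
    have hg0 : g 0 ≤ 0 := by
      show e^2 * al B (z 0) - be A (z 0) ≤ 0
      rw [hz0]
      nlinarith [hx₁ineq]
    have hg1 : 0 ≤ g 1 := by
      show (0:ℝ) ≤ e^2 * al B (z 1) - be A (z 1)
      rw [hz1]
      nlinarith [hx₂ineq]
    rcases eq_or_lt_of_le hg0 with h0 | h0
    · refine ⟨x₁, hx₁0, hPx₁, ?_⟩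
      have h0' : e^2 * al B (z 0) - be A (z 0) = 0 := h0
      rw [hz0] at h0'
      linarith
    rcases eq_or_lt_of_le hg1 with h1 | h1
    · refine ⟨x₂, hx₂0, hPx₂, ?_⟩
      have h1' : e^2 * al B (z 1) - be A (z 1) = 0 := h1.symm
      rw [hz1] at h1'
      linarith
    have hIVT := intermediate_value_Icc (by norm_num : (0:ℝ) ≤ 1) hgc.continuousOn
    have h0mem : (0:ℝ) ∈ Set.Icc (g 0) (g 1) := ⟨le_of_lt h0, le_of_lt h1⟩
    obtain ⟨θ, hθmem, hθ⟩ := hIVT h0mem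
    have hθval : e^2 * al B (z θ) - be A (z θ) = 0 := hθ
    refine ⟨z θ, ?_, hzP θ, by clear_value g z; linarith⟩
    intro hzero
    have hθ0 : θ ≠ 0 := by rintro rfl; rw [hz0] at hzero; exact hx₁0 hzero
    have hθ1 : θ ≠ 1 := by rintro rfl; rw [hz1] at hzero; exact hx₂0 hzero
    have hzero' : (1 - θ) • x₁ + θ • x₂ = 0 := hzero
    have hx2eq : x₂ = (-(1-θ)/θ) • x₁ := by
      have hstep : θ • x₂ = -((1-θ) • x₁) := by
        rw [add_comm] at hzero'
        rwa [add_eq_zero_iff_eq_neg] at hzero'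
      calc x₂ = θ⁻¹ • (θ • x₂) := by rw [smul_smul, inv_mul_cancel₀ hθ0, one_smul]
        _ = θ⁻¹ • (-((1-θ) • x₁)) := by rw [hstep]
        _ = (-(1-θ)/θ) • x₁ := by
            rw [smul_neg, smul_smul, ← neg_smul]
            congr 1
            field_simp
    have hcontra : g 1 = (-(1-θ)/θ)^2 * g 0 := by
      show e^2 * al B (z 1) - be A (z 1) = (-(1-θ)/θ)^2 * (e^2 * al B (z 0) - be A (z 0))
      rw [hz1, hz0, hx2eq, al_smul, be_smul]
      ring
    clear_value g z
    nlinarith [sq_nonneg (-(1-θ)/θ), hcontra, h0, h1]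
  obtain ⟨w, hw0, hPw, hbal⟩ := hwex
  have hww : 0 < w ⬝ᵥ w := dp_self_pos hw0
  have hffw : ff C B A e w = φ e * (w ⬝ᵥ w) := by
    have := hPform w
    rw [hPw] at this
    simp only [dotProduct_zero] at this
    linarith
  have hffwpos : 0 < ff C B A e w := by
    rw [hffw]; exact mul_pos (hφpos e hepos) hww
  -- contradiction with the scalar hypothesis
  have hsq : Real.sqrt (al B w * be A w) = e * al B w := by
    rw [← hbal]
    have : al B w * (e^2 * al B w) = (e * al B w)^2 := by ring
    rw [this, Real.sqrt_sq (mul_nonneg hepos.le (al_nonneg B w))]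
  have hsc := hs w
  rw [hsq] at hsc
  have hffw2 : ff C B A e w = ga C w + 2 * (e * al B w) := by
    unfold ff
    rw [← hbal]
    field_simp
    ring
  rw [hffw2] at hffwpos
  linarith

/-- easy direction -/
lemma easy (C : Matrix (Fin n) (Fin n) ℝ) (hC : C.IsSymm)
    (B : Matrix (Fin n) (Fin p) ℝ) (A : Matrix (Fin q) (Fin n) ℝ)
    {ε : ℝ} (hε : 0 < ε)
    (h : (-(C + ε • (B * Bᵀ) + ε⁻¹ • (Aᵀ * A))).PosSemidef) :
    ∀ Δ : Matrix (Fin p) (Fin q) ℝ,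
        ((1 : Matrix (Fin q) (Fin q) ℝ) - Δᵀ * Δ).PosSemidef →
        (-(C + B * Δ * A + Aᵀ * Δᵀ * Bᵀ)).PosSemidef := by
  intro Δ hΔ
  rw [psd_iff] at h ⊢
  obtain ⟨hH, hQ⟩ := h
  constructor
  · rw [Matrix.IsHermitian, conjTranspose_eq_transpose_of_trivial]
    simp only [Matrix.transpose_neg, Matrix.transpose_add, Matrix.transpose_mul,
      Matrix.transpose_transpose, hC.eq]
    rw [← Matrix.mul_assoc, ← Matrix.mul_assoc]
    abel
  · intro x
    have hfx : ff C B A ε x ≤ 0 := by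
      have h1 := hQ x
      rw [neg_mulVec, dotProduct_neg, ff_eq] at h1; linarith
    set u := Bᵀ *ᵥ x with hu
    set v := A *ᵥ x with hv
    set w := Δ *ᵥ v with hw
    have hterm1 : x ⬝ᵥ ((B * Δ * A) *ᵥ x) = u ⬝ᵥ w := by
      rw [← mulVec_mulVec, ← mulVec_mulVec, dp_transfer]
    have hterm2 : x ⬝ᵥ ((Aᵀ * Δᵀ * Bᵀ) *ᵥ x) = u ⬝ᵥ w := by
      have e : Aᵀ * Δᵀ * Bᵀ = (B * Δ * A)ᵀ := by
        simp [Matrix.transpose_mul, Matrix.mul_assoc]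
      rw [e, dp_transfer, transpose_transpose, dotProduct_comm, hterm1]
    have hww : w ⬝ᵥ w ≤ v ⬝ᵥ v := by
      have h2 := hΔ.dotProduct_mulVec_nonneg v
      have e2 : star v ⬝ᵥ (((1 : Matrix (Fin q) (Fin q) ℝ) - Δᵀ * Δ) *ᵥ v)
          = v ⬝ᵥ v - w ⬝ᵥ w := by
        rw [star_trivial, sub_mulVec, dotProduct_sub, one_mulVec, be_eq]; rfl
      rw [e2] at h2; linarith
    have hcross : 2 * (u ⬝ᵥ w) ≤ ε * al B x + ε⁻¹ * be A x := by
      have h3 : u ⬝ᵥ w ≤ Real.sqrt (al B x * be A x) := by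
        have h4 := cs u w
        have h5 : (u ⬝ᵥ w)^2 ≤ al B x * be A x := by
          have : (u ⬝ᵥ u) * (w ⬝ᵥ w) ≤ al B x * be A x := by
            have hal : u ⬝ᵥ u = al B x := rfl
            have hbe : v ⬝ᵥ v = be A x := rfl
            rw [hal]
            exact mul_le_mul_of_nonneg_left (by rw [← hbe]; exact hww) (al_nonneg B x)
          linarith
        calc u ⬝ᵥ w ≤ |u ⬝ᵥ w| := le_abs_self _
          _ = Real.sqrt ((u ⬝ᵥ w)^2) := (Real.sqrt_sq_eq_abs _).symm
          _ ≤ Real.sqrt (al B x * be A x) := Real.sqrt_le_sqrt h5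
      have h6 := amgm hε (al_nonneg B x) (be_nonneg A x)
      linarith
    rw [neg_mulVec, dotProduct_neg, add_mulVec, add_mulVec, dotProduct_add, dotProduct_add,
      hterm1, hterm2]
    have hga : x ⬝ᵥ (C *ᵥ x) = ga C x := rfl
    rw [hga]
    unfold ff at hfx
    linarith

end PetersenAux

open PetersenAux in
/-- Petersen's lemma (static form). For `C` symmetric and nonzero `B`, `A`:
`C + BΔA + AᵀΔᵀBᵀ ⪯ 0` for all `Δ` with `ΔᵀΔ ⪯ I` iff there exists `ε > 0` with
`C + ε B Bᵀ + ε⁻¹ Aᵀ A ⪯ 0`. -/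
theorem petersen_lemma (n p q : ℕ) (C : Matrix (Fin n) (Fin n) ℝ) (hC : C.IsSymm)
    (B : Matrix (Fin n) (Fin p) ℝ) (hB : B ≠ 0)
    (A : Matrix (Fin q) (Fin n) ℝ) (hA : A ≠ 0) :
    (∀ Δ : Matrix (Fin p) (Fin q) ℝ,
        ((1 : Matrix (Fin q) (Fin q) ℝ) - Δᵀ * Δ).PosSemidef →
        (-(C + B * Δ * A + Aᵀ * Δᵀ * Bᵀ)).PosSemidef) ↔
      ∃ ε : ℝ, 0 < ε ∧ (-(C + ε • (B * Bᵀ) + ε⁻¹ • (Aᵀ * A))).PosSemidef := by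
  constructor
  · intro h
    obtain ⟨ε, hε, hle⟩ := hard C hC B hB A hA (scalar_of_hyp C B A h)
    refine ⟨ε, hε, (psd_iff _).mpr ⟨?_, ?_⟩⟩
    · rw [Matrix.IsHermitian, conjTranspose_eq_transpose_of_trivial]
      simp [Matrix.transpose_add, Matrix.transpose_smul, Matrix.transpose_mul, hC.eq]
    · intro x
      rw [neg_mulVec, dotProduct_neg, ff_eq]
      linarith [hle x]
  · rintro ⟨ε, hε, h⟩
    exact easy C hC B A hε h
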